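/- Let μ be a probability measure on [0,1] that is absolutely continuous with respect to Lebesgue measure with density g satisfying 0 < c ≤ g(x) ≤ C < ∞ for almost every x, and let G(x) = μ([0,x]). Then for every Hilbert basis (complete orthonormal system) {e_i}_{i∈I} of L²([0,1], Lebesgue), the family {e_i ∘ G}_{i∈I} is a Hilbert basis of L²([0,1], μ); that is, the warped system is orthonormal and total in L²([0,1], μ). -/

import Mathlib

open MeasureTheory

/-- If `μ` is a probability measure on `[0,1]` with density `g` (w.r.t. Lebesgue measure)
satisfying `0 < c ≤ g ≤ C < ∞` a.e., and `G(x) = μ([0,x])`, then for every Hilbert basis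
(total orthonormal system) `{e_i}` of `L²([0,1], Lebesgue)`, the warped family
`{e_i ∘ G}` is a Hilbert basis of `L²([0,1], μ)`: it is orthonormal and total. -/
theorem warped_system_is_hilbert_basis
    (μ : Measure ℝ) [IsProbabilityMeasure μ]
    (g : ℝ → ℝ) (c C : ℝ) (hc : 0 < c) (hcC : c ≤ C)
    (hμ : μ = (volume.restrict (Set.Icc (0 : ℝ) 1)).withDensity
      (fun x => ENNReal.ofReal (g x)))
    (hg : ∀ᵐ x ∂(volume.restrict (Set.Icc (0 : ℝ) 1)), c ≤ g x ∧ g x ≤ C)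
    (G : ℝ → ℝ) (hG : ∀ x, G x = (μ (Set.Icc (0 : ℝ) x)).toReal)
    (ι : Type) [DecidableEq ι] (e : ι → ℝ → ℝ)
    (hmeas : ∀ i, Measurable (e i))
    (hL2 : ∀ i, MemLp (e i) 2 (volume.restrict (Set.Icc (0 : ℝ) 1)))
    -- `{e_i}` is orthonormal in L²([0,1], Lebesgue)
    (hortho : ∀ i j, (∫ y in Set.Icc (0 : ℝ) 1, e i y * e j y) = if i = j then 1 else 0)
    -- `{e_i}` is total in L²([0,1], Lebesgue)
    (htotal : ∀ w : ℝ → ℝ, Measurable w →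
      MemLp w 2 (volume.restrict (Set.Icc (0 : ℝ) 1)) →
      (∀ i, (∫ y in Set.Icc (0 : ℝ) 1, w y * e i y) = 0) →
      w =ᵐ[volume.restrict (Set.Icc (0 : ℝ) 1)] 0) :
    -- `{e_i ∘ G}` is orthonormal in L²([0,1], μ)
    (∀ i j, (∫ x, e i (G x) * e j (G x) ∂μ) = if i = j then 1 else 0) ∧
    -- `{e_i ∘ G}` is total in L²([0,1], μ)
    (∀ w : ℝ → ℝ, Measurable w → MemLp w 2 μ →
      (∀ i, (∫ x, w x * e i (G x) ∂μ) = 0) → w =ᵐ[μ] 0) := by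
  classical
  set lam := volume.restrict (Set.Icc (0:ℝ) 1) with hlam
  have hμac : μ ≪ lam := by rw [hμ]; exact withDensity_absolutelyContinuous _ _
  have hout : μ ((Set.Icc (0:ℝ) 1)ᶜ) = 0 := by
    apply hμac
    rw [hlam, Measure.restrict_apply measurableSet_Icc.compl]
    simp
  have hμs : ∀ s : Set ℝ, μ (s ∩ Set.Icc 0 1) = μ s := fun s => measure_inter_conull hout
  have hμfin : ∀ s : Set ℝ, μ s ≠ ⊤ := fun s => (measure_lt_top μ s).ne
  have hmono : Monotone G := by
    intro x y hxy
    rw [hG, hG]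
    exact ENNReal.toReal_mono (hμfin _) (measure_mono (Set.Icc_subset_Icc le_rfl hxy))
  have hmeasG : Measurable G := hmono.measurable
  -- lower bound for μ on Ioc inside [0,1]
  have hIoc_pos : ∀ x y : ℝ, 0 ≤ x → x < y → y ≤ 1 → 0 < μ (Set.Ioc x y) := by
    intro x y hx hxy hy1
    rw [hμ, withDensity_apply _ measurableSet_Ioc]
    have hae : ∀ᵐ a ∂(lam.restrict (Set.Ioc x y)), ENNReal.ofReal c ≤ ENNReal.ofReal (g a) :=
      ae_restrict_of_ae (hg.mono fun a ha => ENNReal.ofReal_le_ofReal ha.1)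
    have h1 : ENNReal.ofReal c * lam (Set.Ioc x y)
        ≤ ∫⁻ a in Set.Ioc x y, ENNReal.ofReal (g a) ∂lam := by
      calc ENNReal.ofReal c * lam (Set.Ioc x y)
          = ∫⁻ _ in Set.Ioc x y, ENNReal.ofReal c ∂lam := by
            rw [setLIntegral_const]
        _ ≤ _ := lintegral_mono_ae hae
    refine lt_of_lt_of_le ?_ h1
    have hsub : Set.Ioc x y ⊆ Set.Icc 0 1 :=
      fun a ha => ⟨le_trans hx ha.1.le, le_trans ha.2 hy1⟩
    have hlamIoc : lam (Set.Ioc x y) = ENNReal.ofReal (y - x) := by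
      rw [hlam, Measure.restrict_apply measurableSet_Ioc, Set.inter_eq_left.mpr hsub,
        Real.volume_Ioc]
    rw [hlamIoc]
    exact ENNReal.mul_pos (by simp [ENNReal.ofReal_pos, hc]) (by simp [ENNReal.ofReal_pos, hxy])
  -- additivity of G
  have hGdiff : ∀ x y : ℝ, 0 ≤ x → x ≤ y → G y = G x + (μ (Set.Ioc x y)).toReal := by
    intro x y hx hxy
    rw [hG, hG]
    have hsplit : Set.Icc 0 x ∪ Set.Ioc x y = Set.Icc 0 y := Set.Icc_union_Ioc_eq_Icc hx hxy
    have hdisj : Disjoint (Set.Icc (0:ℝ) x) (Set.Ioc x y) := by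
      rw [Set.disjoint_left]; intro a ha ha'; exact absurd ha.2 (not_le.mpr ha'.1)
    rw [← hsplit, measure_union hdisj measurableSet_Ioc,
      ENNReal.toReal_add (hμfin _) (hμfin _)]
  have hstrict : StrictMonoOn G (Set.Icc 0 1) := by
    intro x hx y hy hxy
    rw [hGdiff x y hx.1 hxy.le]
    have := ENNReal.toReal_pos (hIoc_pos x y hx.1 hxy hy.2).ne' (hμfin _)
    linarith
  -- Lipschitz continuity of G
  have hIoc_le : ∀ x y : ℝ, x ≤ y → (μ (Set.Ioc x y)).toReal ≤ C * (y - x) := by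
    intro x y hxy
    have h1 : μ (Set.Ioc x y) ≤ ENNReal.ofReal C * ENNReal.ofReal (y - x) := by
      rw [hμ, withDensity_apply _ measurableSet_Ioc]
      have hae : ∀ᵐ a ∂(lam.restrict (Set.Ioc x y)), ENNReal.ofReal (g a) ≤ ENNReal.ofReal C :=
        ae_restrict_of_ae (hg.mono fun a ha => ENNReal.ofReal_le_ofReal ha.2)
      calc ∫⁻ a in Set.Ioc x y, ENNReal.ofReal (g a) ∂lam
          ≤ ∫⁻ _ in Set.Ioc x y, ENNReal.ofReal C ∂lam := lintegral_mono_ae hae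
        _ = ENNReal.ofReal C * lam (Set.Ioc x y) := setLIntegral_const _ _
        _ ≤ ENNReal.ofReal C * ENNReal.ofReal (y - x) := by
            apply mul_le_mul_right
            rw [hlam, Measure.restrict_apply measurableSet_Ioc]
            exact le_trans (measure_mono Set.inter_subset_left)
              (le_of_eq Real.volume_Ioc)
    have hC0 : 0 ≤ C := le_trans hc.le hcC
    calc (μ (Set.Ioc x y)).toReal
        ≤ (ENNReal.ofReal C * ENNReal.ofReal (y - x)).toReal :=
          ENNReal.toReal_mono (by simp [ENNReal.mul_ne_top, ENNReal.ofReal_ne_top]) h1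
      _ = C * (y - x) := by
          rw [← ENNReal.ofReal_mul hC0, ENNReal.toReal_ofReal (by nlinarith)]
  have hGlip : ∀ x y : ℝ, x ≤ y → G y - G x ≤ C * (y - x) := by
    intro x y hxy
    have h2 : μ (Set.Icc 0 y) ≤ μ (Set.Icc 0 x) + μ (Set.Ioc x y) := by
      refine le_trans (measure_mono ?_) (measure_union_le _ _)
      intro a ha
      rcases le_or_gt a x with h | h
      · exact Or.inl ⟨ha.1, h⟩
      · exact Or.inr ⟨h, ha.2⟩
    have h3 : G y ≤ G x + (μ (Set.Ioc x y)).toReal := by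
      rw [hG, hG, ← ENNReal.toReal_add (hμfin _) (hμfin _)]
      exact ENNReal.toReal_mono (ENNReal.add_ne_top.mpr ⟨hμfin _, hμfin _⟩) h2
    have := hIoc_le x y hxy
    linarith
  have hcont : Continuous G := by
    have hC0 : 0 ≤ C := le_trans hc.le hcC
    refine (LipschitzWith.of_dist_le_mul (K := Real.toNNReal C) (f := G) ?_).continuous
    intro x y
    rcases le_total x y with h | h
    · rw [Real.dist_eq, Real.dist_eq, abs_of_nonpos (by linarith [hmono h]),
        abs_of_nonpos (by linarith), Real.coe_toNNReal _ hC0]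
      have := hGlip x y h; linarith
    · rw [Real.dist_eq, Real.dist_eq, abs_of_nonneg (by linarith [hmono h]),
        abs_of_nonneg (by linarith), Real.coe_toNNReal _ hC0]
      have := hGlip y x h; linarith
  -- boundary values
  have hμ0 : μ {(0:ℝ)} = 0 := by
    apply hμac
    rw [hlam, Measure.restrict_apply (measurableSet_singleton _)]
    exact measure_mono_null Set.inter_subset_left Real.volume_singleton
  have hG0 : G 0 = 0 := by
    rw [hG, Set.Icc_self, hμ0]; simp
  have hμIcc : μ (Set.Icc 0 1) = 1 := by
    rw [← Set.univ_inter (Set.Icc (0:ℝ) 1), hμs]; exact measure_univ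
  have hG1 : G 1 = 1 := by rw [hG, hμIcc]; simp
  -- surjectivity onto [0,1]
  have hsurj : ∀ t ∈ Set.Icc (0:ℝ) 1, ∃ s ∈ Set.Icc (0:ℝ) 1, G s = t := by
    intro t ht
    have := intermediate_value_Icc (zero_le_one) hcont.continuousOn
    rw [hG0, hG1] at this
    obtain ⟨s, hs, hGs⟩ := this ht
    exact ⟨s, hs, hGs⟩
  -- the pushforward of μ under G is Lebesgue on [0,1]
  have hmap : Measure.map G μ = lam := by
    haveI : IsProbabilityMeasure (Measure.map G μ) :=
      Measure.isProbabilityMeasure_map hmeasG.aemeasurable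
    refine Measure.ext_of_Iic _ _ (fun t => ?_)
    rw [Measure.map_apply hmeasG measurableSet_Iic, hlam,
      Measure.restrict_apply measurableSet_Iic, ← hμs (G ⁻¹' Set.Iic t)]
    rcases lt_or_ge t 0 with ht | ht
    · have h1 : G ⁻¹' Set.Iic t ∩ Set.Icc 0 1 = ∅ := by
        ext a
        simp only [Set.mem_inter_iff, Set.mem_preimage, Set.mem_Iic, Set.mem_Icc,
          Set.mem_empty_iff_false, iff_false]
        rintro ⟨h1, h2, h3⟩
        have : (0:ℝ) ≤ G a := by rw [← hG0]; exact hmono h2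
        linarith
      have h2 : Set.Iic t ∩ Set.Icc (0:ℝ) 1 = ∅ := by
        ext a
        simp only [Set.mem_inter_iff, Set.mem_Iic, Set.mem_Icc, Set.mem_empty_iff_false,
          iff_false]
        rintro ⟨h1, h2, h3⟩; linarith
      rw [h1, h2]; simp
    · rcases le_or_gt t 1 with ht1 | ht1
      · obtain ⟨s, hs, hGs⟩ := hsurj t ⟨ht, ht1⟩
        have h1 : G ⁻¹' Set.Iic t ∩ Set.Icc 0 1 = Set.Icc 0 s := by
          ext a
          simp only [Set.mem_inter_iff, Set.mem_preimage, Set.mem_Iic, Set.mem_Icc]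
          constructor
          · rintro ⟨h1, h2, h3⟩
            refine ⟨h2, ?_⟩
            by_contra hcon
            push_neg at hcon
            have := hstrict hs ⟨h2, h3⟩ hcon
            rw [hGs] at this; linarith
          · rintro ⟨h1, h2⟩
            exact ⟨by rw [← hGs]; exact hmono h2, h1, le_trans h2 hs.2⟩
        have h2 : Set.Iic t ∩ Set.Icc (0:ℝ) 1 = Set.Icc 0 t := by
          ext a
          simp only [Set.mem_inter_iff, Set.mem_Iic, Set.mem_Icc]
          constructor
          · rintro ⟨h1, h2, h3⟩; exact ⟨h2, h1⟩
          · rintro ⟨h1, h2⟩; exact ⟨h2, h1, le_trans h2 ht1⟩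
        rw [h1, h2, Real.volume_Icc]
        have : μ (Set.Icc 0 s) = ENNReal.ofReal (G s) := by
          rw [hG, ENNReal.ofReal_toReal (hμfin _)]
        rw [this, hGs]
        norm_num
      · have h1 : G ⁻¹' Set.Iic t ∩ Set.Icc 0 1 = Set.Icc 0 1 := by
          apply Set.inter_eq_right.mpr
          intro a ha
          simp only [Set.mem_preimage, Set.mem_Iic]
          have : G a ≤ 1 := by rw [← hG1]; exact hmono ha.2
          linarith
        have h2 : Set.Iic t ∩ Set.Icc (0:ℝ) 1 = Set.Icc 0 1 := by
          apply Set.inter_eq_right.mpr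
          intro a ha
          exact le_trans ha.2 ht1.le
        rw [h1, h2, hμIcc, Real.volume_Icc]
        norm_num
  -- change of variables
  have hint : ∀ f : ℝ → ℝ, Measurable f →
      (∫ y in Set.Icc (0:ℝ) 1, f y) = ∫ x, f (G x) ∂μ := by
    intro f hf
    rw [← hlam, ← hmap, integral_map hmeasG.aemeasurable hf.aestronglyMeasurable]
  constructor
  · intro i j
    rw [← hint (fun y => e i y * e j y) ((hmeas i).mul (hmeas j))]
    exact hortho i j
  · intro w hw hwL2 hwint
    -- generalized inverse of G
    set H : ℝ → ℝ := fun t => sInf ({x ∈ Set.Icc (0:ℝ) 1 | t ≤ G x} ∪ {1}) with hH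
    have hbdd : ∀ t : ℝ, BddBelow ({x ∈ Set.Icc (0:ℝ) 1 | t ≤ G x} ∪ {1}) := by
      intro t
      refine ⟨0, fun y hy => ?_⟩
      rcases hy with ⟨⟨h0, _⟩, _⟩ | h
      · exact h0
      · simp at h; linarith
    have hHmono : Monotone H := by
      intro t t' htt'
      apply csInf_le_csInf (hbdd t) ⟨1, Or.inr rfl⟩
      rintro y (⟨hy1, hy2⟩ | h)
      · exact Or.inl ⟨hy1, le_trans htt' hy2⟩
      · exact Or.inr h
    have hHG : ∀ x ∈ Set.Ioc (0:ℝ) 1, H (G x) = x := by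
      intro x hx
      have hxIcc : x ∈ Set.Icc (0:ℝ) 1 := ⟨hx.1.le, hx.2⟩
      have hxS : x ∈ {y ∈ Set.Icc (0:ℝ) 1 | G x ≤ G y} ∪ {1} := Or.inl ⟨hxIcc, le_rfl⟩
      refine le_antisymm (csInf_le (hbdd _) hxS) (le_csInf ⟨x, hxS⟩ ?_)
      rintro y (⟨hy1, hy2⟩ | h)
      · by_contra hcon
        push_neg at hcon
        have := hstrict hy1 hxIcc hcon
        linarith
      · simp at h; rw [h]; exact hx.2
    have hmeasH : Measurable H := hHmono.measurable
    set v : ℝ → ℝ := fun y => w (H y) with hv_def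
    have hv : Measurable v := hw.comp hmeasH
    -- μ-a.e. x lies in (0,1]
    have haeIoc : ∀ᵐ x ∂μ, x ∈ Set.Ioc (0:ℝ) 1 := by
      rw [MeasureTheory.ae_iff]
      have h1 : {x : ℝ | ¬ x ∈ Set.Ioc (0:ℝ) 1} = (Set.Ioc (0:ℝ) 1)ᶜ := rfl
      have h2 : (Set.Ioc (0:ℝ) 1)ᶜ ∩ Set.Icc 0 1 = {0} := by
        ext a
        simp only [Set.mem_inter_iff, Set.mem_compl_iff, Set.mem_Ioc, Set.mem_Icc,
          Set.mem_singleton_iff, not_and, not_le]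
        constructor
        · rintro ⟨h3, h4, h5⟩
          by_contra h6
          have : 0 < a := lt_of_le_of_ne h4 (Ne.symm h6)
          have := h3 this; linarith
        · rintro rfl; refine ⟨fun h => absurd h (lt_irrefl 0), le_rfl, zero_le_one⟩
      rw [h1, ← hμs ((Set.Ioc (0:ℝ) 1)ᶜ), h2, hμ0]
    have hwv : w =ᵐ[μ] fun x => v (G x) := by
      refine haeIoc.mono fun x hx => ?_
      simp only [hv_def]
      rw [hHG x hx]
    have hvGL2 : MemLp (fun x => v (G x)) 2 μ := hwL2.ae_eq hwv
    have hvL2 : MemLp v 2 lam := by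
      rw [← hmap]
      exact (memLp_map_measure_iff hv.aestronglyMeasurable hmeasG.aemeasurable).mpr hvGL2
    have hvint : ∀ i, (∫ y in Set.Icc (0:ℝ) 1, v y * e i y) = 0 := by
      intro i
      rw [hint (fun y => v y * e i y) (hv.mul (hmeas i))]
      have h2 : (fun x => v (G x) * e i (G x)) =ᵐ[μ] fun x => w x * e i (G x) :=
        hwv.mono fun x hx => by dsimp only; rw [hx]
      rw [integral_congr_ae h2]
      exact hwint i
    have hv0 : v =ᵐ[lam] 0 := htotal v hv hvL2 hvint
    have hset : lam {y | v y ≠ 0} = 0 := by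
      rw [Filter.EventuallyEq, MeasureTheory.ae_iff] at hv0
      simpa using hv0
    have hμset : μ {x | v (G x) ≠ 0} = 0 := by
      have hms : MeasurableSet {y : ℝ | v y ≠ 0} :=
        (hv (measurableSet_singleton 0)).compl
      have heq : {x | v (G x) ≠ 0} = G ⁻¹' {y | v y ≠ 0} := rfl
      rw [heq, ← Measure.map_apply hmeasG hms, hmap]
      exact hset
    have hvG0 : (fun x => v (G x)) =ᵐ[μ] 0 := by
      rw [Filter.EventuallyEq, MeasureTheory.ae_iff]
      simpa using hμset
    exact hwv.trans hvG0
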